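/- For n ≥ 3, the language L_n of the DFA over {a,b,c} from Definition 1 (a: cycle (1,…,n−1), b: transposition (0,1), c: (1→0), initial 0, final n−1) has syntactic semigroup of cardinality n^n, the maximum possible for a language of state complexity n. -/

import Mathlib

/-- The number of classes of the syntactic congruence of `L` on nonempty words
(`x ≈ y` iff `∀ w z, wxz ∈ L ↔ wyz ∈ L`), i.e. the size of the syntactic semigroup. -/
noncomputable def syntacticSemigroupSize {α : Type*} (L : Language α) : ℕ :=
  Nat.card (Quot fun x y : {w : List α // w ≠ []} =>
    ∀ u z : List α, u ++ x.val ++ z ∈ L ↔ u ++ y.val ++ z ∈ L)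

namespace SyntacticWitness

def phi {α : Type*} {σ : Type*} (M : DFA α σ) (w : List α) : Function.End σ :=
  fun q => M.evalFrom q w

/-- The coercion from permutations to the endomorphism monoid. -/
def permHom (σ : Type*) : Equiv.Perm σ →* Function.End σ where
  toFun π := ⇑π
  map_one' := rfl
  map_mul' _ _ := rfl

theorem phi_append {α : Type*} {σ : Type*} (M : DFA α σ) (x y : List α) :
    phi M (x ++ y) = phi M y * phi M x :=
  funext fun q => M.evalFrom_of_append q x y

theorem eval_rep_zero {n : ℕ} (M : DFA (Fin 3) (Fin n))
    (ha : ∀ q : Fin n,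
      (M.step q 0).val = if q.val = 0 then 0 else if q.val = n - 1 then 1 else q.val + 1)
    (k : ℕ) (s : Fin n) (hs : s.val = 0) :
    M.evalFrom s (List.replicate k 0) = s := by
  induction k generalizing s with
  | zero => rfl
  | succ k ih =>
    rw [List.replicate_succ]
    show M.evalFrom (M.step s 0) (List.replicate k 0) = s
    have h1 : M.step s 0 = s := Fin.ext (by rw [ha]; simp [hs])
    rw [h1]
    exact ih s hs

theorem eval_rep {n : ℕ} (hn : 3 ≤ n) (M : DFA (Fin 3) (Fin n))
    (ha : ∀ q : Fin n,
      (M.step q 0).val = if q.val = 0 then 0 else if q.val = n - 1 then 1 else q.val + 1)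
    (k : ℕ) (s : Fin n) (h1 : 1 ≤ s.val) (h2 : s.val + k ≤ n - 1) :
    (M.evalFrom s (List.replicate k 0)).val = s.val + k := by
  induction k generalizing s with
  | zero => simp
  | succ k ih =>
    rw [List.replicate_succ]
    show (M.evalFrom (M.step s 0) (List.replicate k 0)).val = s.val + (k + 1)
    have hv : (M.step s 0).val = s.val + 1 := by
      rw [ha, if_neg (by omega), if_neg (by omega)]
    rw [ih (M.step s 0) (by omega) (by omega)]
    omega

theorem reach {n : ℕ} (hn : 3 ≤ n) (M : DFA (Fin 3) (Fin n))
    (hstart : M.start = ⟨0, Nat.lt_of_lt_of_le (Nat.zero_lt_succ 2) hn⟩)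
    (ha : ∀ q : Fin n,
      (M.step q 0).val = if q.val = 0 then 0 else if q.val = n - 1 then 1 else q.val + 1)
    (hb : ∀ q : Fin n,
      (M.step q 1).val = if q.val = 0 then 1 else if q.val = 1 then 0 else q.val)
    (p : Fin n) : ∃ u : List (Fin 3), M.evalFrom M.start u = p := by
  rcases Nat.eq_zero_or_pos p.val with h0 | hp
  · refine ⟨[], ?_⟩
    rw [DFA.evalFrom_nil, hstart]
    exact Fin.ext (by simp [h0.symm])
  · refine ⟨1 :: List.replicate (p.val - 1) 0, ?_⟩
    show M.evalFrom (M.step M.start 1) (List.replicate (p.val - 1) 0) = p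
    have h0 : M.start.val = 0 := by rw [hstart]
    have hv : (M.step M.start 1).val = 1 := by
      rw [hb, if_pos h0]
    have hlt := p.isLt
    apply Fin.ext
    rw [eval_rep hn M ha (p.val - 1) _ (by omega) (by omega)]
    omega

theorem dist {n : ℕ} (hn : 3 ≤ n) (M : DFA (Fin 3) (Fin n))
    (haccept : M.accept = {⟨n - 1, Nat.sub_lt (Nat.lt_of_lt_of_le (Nat.zero_lt_succ 2) hn) Nat.one_pos⟩})
    (ha : ∀ q : Fin n,
      (M.step q 0).val = if q.val = 0 then 0 else if q.val = n - 1 then 1 else q.val + 1)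
    (p q : Fin n) (hpq : p.val < q.val) :
    ∃ z : List (Fin 3), M.evalFrom q z ∈ M.accept ∧ M.evalFrom p z ∉ M.accept := by
  have hq := q.isLt
  refine ⟨List.replicate (n - 1 - q.val) 0, ?_, ?_⟩
  · have h := eval_rep hn M ha (n - 1 - q.val) q (by omega) (by omega)
    rw [haccept, Set.mem_singleton_iff]
    apply Fin.ext
    show _ = n - 1
    rw [h]
    omega
  · intro hmem
    rw [haccept, Set.mem_singleton_iff] at hmem
    have hv : (M.evalFrom p (List.replicate (n - 1 - q.val) 0)).val = n - 1 :=
      congrArg Fin.val hmem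
    rcases Nat.eq_zero_or_pos p.val with h0 | hp
    · rw [eval_rep_zero M ha _ p h0] at hv
      omega
    · rw [eval_rep hn M ha (n - 1 - q.val) p (by omega) (by omega)] at hv
      omega

theorem phi_surj {n : ℕ} (hn : 3 ≤ n) (M : DFA (Fin 3) (Fin n))
    (ha : ∀ q : Fin n,
      (M.step q 0).val = if q.val = 0 then 0 else if q.val = n - 1 then 1 else q.val + 1)
    (hb : ∀ q : Fin n,
      (M.step q 1).val = if q.val = 0 then 1 else if q.val = 1 then 0 else q.val)
    (hc : ∀ q : Fin n, (M.step q 2).val = if q.val = 1 then 0 else q.val) :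
    ∀ f : Function.End (Fin n), ∃ w : List (Fin 3), w ≠ [] ∧ phi M w = f := by
  classical
  have hn0 : 0 < n := by omega
  set S : Set (Function.End (Fin n)) :=
    {fun q => M.step q 0, fun q => M.step q 1, fun q => M.step q 2} with hSdef
  set Cl : Submonoid (Function.End (Fin n)) := Submonoid.closure S with hCldef
  have hmem_fa : (fun q => M.step q 0 : Function.End (Fin n)) ∈ Cl :=
    Submonoid.subset_closure (Set.mem_insert _ _)
  have hmem_fb : (fun q => M.step q 1 : Function.End (Fin n)) ∈ Cl :=
    Submonoid.subset_closure (Set.mem_insert_of_mem _ (Set.mem_insert _ _))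
  have hmem_fc : (fun q => M.step q 2 : Function.End (Fin n)) ∈ Cl :=
    Submonoid.subset_closure (Set.mem_insert_of_mem _ (Set.mem_insert_of_mem _ rfl))
  -- inverses of permutations in the closure stay in the closure
  have inv_mem : ∀ π : Equiv.Perm (Fin n),
      (⇑π : Function.End (Fin n)) ∈ Cl → (⇑π⁻¹ : Function.End (Fin n)) ∈ Cl := by
    intro π h
    have hord : 0 < orderOf π := orderOf_pos π
    have h1 : π * π ^ (orderOf π - 1) = 1 := by
      rw [← pow_succ']
      have he : orderOf π - 1 + 1 = orderOf π := by omega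
      rw [he, pow_orderOf_eq_one]
    have h2 : π⁻¹ = π ^ (orderOf π - 1) := inv_eq_of_mul_eq_one_right h1
    have hp : permHom (Fin n) (π ^ (orderOf π - 1))
        = (permHom (Fin n) π) ^ (orderOf π - 1) :=
      map_pow (permHom (Fin n)) π (orderOf π - 1)
    rw [h2]
    show permHom (Fin n) (π ^ (orderOf π - 1)) ∈ Cl
    rw [hp]
    exact Submonoid.pow_mem Cl h _
  -- the first generator as a permutation
  have fa_inj : Function.Injective (fun q : Fin n => M.step q 0) := by
    intro p q h
    have h' : (M.step p 0).val = (M.step q 0).val := congrArg Fin.val h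
    rw [ha, ha] at h'
    have hp := p.isLt; have hq := q.isLt
    apply Fin.ext
    split_ifs at h' <;> omega
  set A : Equiv.Perm (Fin n) :=
    Equiv.ofBijective _ (Finite.injective_iff_bijective.mp fa_inj) with hAdef
  have hA_mem : (⇑A : Function.End (Fin n)) ∈ Cl := hmem_fa
  -- swaps (0, m)
  have swap_zero_mem : ∀ m : ℕ, 1 ≤ m → ∀ hm : m < n,
      (⇑(Equiv.swap (⟨0, hn0⟩ : Fin n) ⟨m, hm⟩) : Function.End (Fin n)) ∈ Cl := by
    intro m
    induction m with
    | zero => omega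
    | succ k ih =>
      intro _ hm
      by_cases hk : k = 0
      · subst hk
        have heq : (⇑(Equiv.swap (⟨0, hn0⟩ : Fin n) ⟨1, hm⟩) : Function.End (Fin n))
            = fun q => M.step q 1 := by
          funext q
          apply Fin.ext
          show (Equiv.swap (⟨0, hn0⟩ : Fin n) ⟨1, hm⟩ q).val = _
          rw [Equiv.swap_apply_def, hb]
          by_cases h0 : q = ⟨0, hn0⟩
          · rw [if_pos h0, if_pos (by rw [h0])]
          · rw [if_neg h0]
            have h0' : q.val ≠ 0 := fun hv => h0 (Fin.ext hv)
            rw [if_neg h0']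
            by_cases h1 : q = ⟨1, hm⟩
            · rw [if_pos h1, if_pos (by rw [h1])]
            · have h1' : q.val ≠ 1 := fun hv => h1 (Fin.ext hv)
              rw [if_neg h1, if_neg h1']
        rw [heq]
        exact hmem_fb
      · have hk1 : k < n := by omega
        have e1 : A ⟨0, hn0⟩ = ⟨0, hn0⟩ := by
          apply Fin.ext
          show (M.step _ 0).val = _
          rw [ha]
          simp
        have e2 : A ⟨k, hk1⟩ = ⟨k + 1, hm⟩ := by
          apply Fin.ext
          show (M.step _ 0).val = _
          rw [ha, if_neg (by simpa using hk), if_neg (by show k ≠ n - 1; omega)]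
        have e3 := Equiv.swap_apply_apply A ⟨0, hn0⟩ ⟨k, hk1⟩
        rw [e1, e2] at e3
        rw [e3]
        show permHom (Fin n) (A * Equiv.swap ⟨0, hn0⟩ ⟨k, hk1⟩ * A⁻¹) ∈ Cl
        rw [map_mul, map_mul]
        exact mul_mem (mul_mem hA_mem (ih (by omega) hk1)) (inv_mem A hA_mem)
  -- all swaps
  have swap_mem : ∀ x y : Fin n, x ≠ y →
      (⇑(Equiv.swap x y) : Function.End (Fin n)) ∈ Cl := by
    have base : ∀ y : Fin n, y ≠ ⟨0, hn0⟩ →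
        (⇑(Equiv.swap (⟨0, hn0⟩ : Fin n) y) : Function.End (Fin n)) ∈ Cl := by
      intro y hy
      have h1 : 1 ≤ y.val := by
        rcases Nat.eq_zero_or_pos y.val with h | h
        · exact absurd (Fin.ext h) hy
        · exact h
      have h2 := swap_zero_mem y.val h1 y.isLt
      have h3 : (⟨y.val, y.isLt⟩ : Fin n) = y := rfl
      rwa [h3] at h2
    intro x y hxy
    by_cases hx0 : x = ⟨0, hn0⟩
    · subst hx0
      exact base y (Ne.symm hxy)
    by_cases hy0 : y = ⟨0, hn0⟩
    · subst hy0
      rw [Equiv.swap_comm]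
      exact base x hx0
    · have e3 := Equiv.swap_apply_apply (Equiv.swap (⟨0, hn0⟩ : Fin n) x) (⟨0, hn0⟩ : Fin n) y
      rw [Equiv.swap_apply_left, Equiv.swap_apply_of_ne_of_ne hy0 (Ne.symm hxy)] at e3
      rw [e3]
      show permHom (Fin n)
        (Equiv.swap ⟨0, hn0⟩ x * Equiv.swap ⟨0, hn0⟩ y * (Equiv.swap ⟨0, hn0⟩ x)⁻¹) ∈ Cl
      rw [map_mul, map_mul]
      exact mul_mem (mul_mem (base x hx0) (base y hy0)) (inv_mem _ (base x hx0))
  -- all permutations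
  have perm_mem : ∀ π : Equiv.Perm (Fin n), (⇑π : Function.End (Fin n)) ∈ Cl := by
    intro π
    have hπtop : π ∈ Submonoid.closure {σ : Equiv.Perm (Fin n) | σ.IsSwap} := by
      rw [Equiv.Perm.mclosure_isSwap]
      trivial
    refine Submonoid.closure_induction
      (motive := fun (σ : Equiv.Perm (Fin n)) _ => (⇑σ : Function.End (Fin n)) ∈ Cl) ?_ ?_ ?_ hπtop
    · rintro σ ⟨x, y, hxy, rfl⟩
      exact swap_mem x y hxy
    · exact one_mem Cl
    · intro σ τ _ _ hσ hτ
      exact mul_mem hσ hτ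
  -- collapses
  have coll_mem : ∀ i j : Fin n, i ≠ j →
      ((fun x => if x = i then j else x) : Function.End (Fin n)) ∈ Cl := by
    intro i j hij
    set z1 : Fin n := ⟨1, by omega⟩ with hz1
    set σ : Equiv.Perm (Fin n) := Equiv.swap i z1 with hσ
    set π : Equiv.Perm (Fin n) := Equiv.swap (σ j) (⟨0, hn0⟩ : Fin n) * σ with hπd
    have hσi : σ i = z1 := Equiv.swap_apply_left i z1
    have hne1 : σ j ≠ z1 := by
      intro h
      exact hij ((Equiv.injective σ) (h.trans hσi.symm)).symm
    have hne0 : z1 ≠ (⟨0, hn0⟩ : Fin n) := by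
      intro h
      have := congrArg Fin.val h
      simp [hz1] at this
    have hπi : π i = z1 := by
      show Equiv.swap (σ j) (⟨0, hn0⟩ : Fin n) (σ i) = z1
      rw [hσi]
      exact Equiv.swap_apply_of_ne_of_ne (Ne.symm hne1) hne0
    have hπj : π j = ⟨0, hn0⟩ := by
      show Equiv.swap (σ j) (⟨0, hn0⟩ : Fin n) (σ j) = _
      rw [Equiv.swap_apply_left]
    have key : ((fun x => if x = i then j else x) : Function.End (Fin n))
        = fun x => π⁻¹ (M.step (π x) 2) := by
      funext x
      show (if x = i then j else x) = π⁻¹ (M.step (π x) 2)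
      by_cases hx : x = i
      · subst hx
        rw [if_pos rfl, hπi]
        have hstep : M.step z1 2 = (⟨0, hn0⟩ : Fin n) := by
          apply Fin.ext
          rw [hc]
          simp [hz1]
        rw [hstep, ← hπj]; exact (π.symm_apply_apply j).symm
      · rw [if_neg hx]
        have h1 : (π x).val ≠ 1 := by
          intro h
          apply hx
          have hpx : π x = z1 := Fin.ext h
          rw [← hπi] at hpx
          exact (Equiv.injective π) hpx
        have hstep : M.step (π x) 2 = π x := by
          apply Fin.ext
          rw [hc, if_neg h1]
        rw [hstep]; exact (π.symm_apply_apply x).symm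
    rw [key]
    have h1 := Submonoid.mul_mem Cl
      (Submonoid.mul_mem Cl (inv_mem π (perm_mem π)) hmem_fc) (perm_mem π)
    exact h1
  -- every transformation lies in the closure
  have all_mem : ∀ f : Function.End (Fin n), f ∈ Cl := by
    have main : ∀ d : ℕ, ∀ f : Function.End (Fin n),
        n - (Finset.image f Finset.univ).card ≤ d → f ∈ Cl := by
      intro d
      induction d with
      | zero =>
        intro f hf
        have hle : (Finset.image f Finset.univ).card ≤ n := by
          simpa using Finset.card_le_univ (Finset.image f Finset.univ)
        have hcard : (Finset.image f Finset.univ).card = n := by omega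
        have hsurj : Function.Surjective f := by
          intro y
          have huniv : Finset.image f Finset.univ = Finset.univ :=
            Finset.eq_univ_of_card _ (by rw [Fintype.card_fin]; exact hcard)
          have hy : y ∈ Finset.image f Finset.univ := by
            rw [huniv]
            exact Finset.mem_univ y
          obtain ⟨x, _, hx⟩ := Finset.mem_image.mp hy
          exact ⟨x, hx⟩
        have hbij : Function.Bijective f := Finite.surjective_iff_bijective.mp hsurj
        exact perm_mem (Equiv.ofBijective f hbij)
      | succ d ih =>
        intro f hf
        by_cases hinj : Function.Injective f
        · exact perm_mem (Equiv.ofBijective f (Finite.injective_iff_bijective.mp hinj))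
        · unfold Function.Injective at hinj
          push_neg at hinj
          obtain ⟨i, j, hfij, hij⟩ := hinj
          have hnsurj : ¬ Function.Surjective f := by
            intro hs
            exact hij ((Finite.surjective_iff_bijective.mp hs).injective hfij)
          unfold Function.Surjective at hnsurj
          push_neg at hnsurj
          obtain ⟨v, hv⟩ := hnsurj
          set g : Function.End (Fin n) := Function.update f i v with hg
          have hfeq : f = fun x => g (if x = i then j else x) := by
            funext x
            show f x = g (if x = i then j else x)
            by_cases hx : x = i
            · subst hx
              rw [if_pos rfl, hg]
              exact hfij.trans (Function.update_of_ne (Ne.symm hij) _ _).symm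
            · rw [if_neg hx, hg]; exact (Function.update_of_ne hx _ _).symm
          rw [hfeq]
          have hgmem : g ∈ Cl := by
            apply ih
            have hsub : insert v (Finset.image f Finset.univ) ⊆ Finset.image g Finset.univ := by
              intro y hy
              rw [Finset.mem_insert] at hy
              rcases hy with rfl | hy
              · exact Finset.mem_image.mpr ⟨i, Finset.mem_univ i,
                  by rw [hg]; exact Function.update_self _ _ _⟩
              · obtain ⟨x, _, hx⟩ := Finset.mem_image.mp hy
                by_cases hxi : x = i
                · subst hxi
                  exact Finset.mem_image.mpr ⟨j, Finset.mem_univ j,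
                    by rw [hg]; exact (Function.update_of_ne (Ne.symm hij) _ _).trans (hfij.symm.trans hx)⟩
                · exact Finset.mem_image.mpr ⟨x, Finset.mem_univ x,
                    by rw [hg]; exact (Function.update_of_ne hxi _ _).trans hx⟩
            have hvnot : v ∉ Finset.image f Finset.univ := by
              intro hmem
              obtain ⟨x, _, hx⟩ := Finset.mem_image.mp hmem
              exact hv x hx
            have h1 := Finset.card_le_card hsub
            rw [Finset.card_insert_of_notMem hvnot] at h1
            omega
          exact Submonoid.mul_mem Cl hgmem (coll_mem i j hij)
    intro f
    exact main n f (by omega)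
  -- from closure membership to words
  have words : ∀ l : List (Function.End (Fin n)), (∀ y ∈ l, y ∈ S) →
      ∃ w : List (Fin 3), phi M w = l.prod := by
    intro l
    induction l with
    | nil => exact fun _ => ⟨[], rfl⟩
    | cons y t ih =>
      intro h
      obtain ⟨w, hw⟩ := ih fun z hz => h z (List.mem_cons_of_mem _ hz)
      have hy := h y List.mem_cons_self
      rw [hSdef] at hy
      change y = _ ∨ y = _ ∨ y = _ at hy
      rw [List.prod_cons]
      rcases hy with h0 | h0 | h0
      · exact ⟨w ++ [0], by rw [phi_append, hw, h0]; rfl⟩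
      · exact ⟨w ++ [1], by rw [phi_append, hw, h0]; rfl⟩
      · exact ⟨w ++ [2], by rw [phi_append, hw, h0]; rfl⟩
  intro f
  obtain ⟨l, hl, hprod⟩ := Submonoid.exists_list_of_mem_closure (all_mem f)
  obtain ⟨w, hw⟩ := words l hl
  by_cases hwe : w = []
  · subst hwe
    have hf1 : f = 1 := by rw [← hprod, ← hw]; rfl
    refine ⟨[1, 1], by simp, ?_⟩
    rw [hf1]
    funext q
    show M.step (M.step q 1) 1 = q
    apply Fin.ext
    rw [hb, hb]
    have := q.isLt
    split_ifs <;> simp_all <;> omega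
  · exact ⟨w, hwe, by rw [hw, hprod]⟩

theorem mem_iff_phi {α : Type*} {σ : Type*} (M : DFA α σ) (u x z : List α) :
    u ++ x ++ z ∈ M.accepts ↔ phi M z (phi M x (phi M u M.start)) ∈ M.accept := by
  rw [DFA.mem_accepts]
  show M.evalFrom M.start (u ++ x ++ z) ∈ M.accept ↔ _
  rw [M.evalFrom_of_append, M.evalFrom_of_append]
  rfl

theorem phi_eq_implies_equiv {α : Type*} {σ : Type*} (M : DFA α σ) (x y : List α)
    (h : phi M x = phi M y) (u z : List α) :
    u ++ x ++ z ∈ M.accepts ↔ u ++ y ++ z ∈ M.accepts := by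
  rw [mem_iff_phi, mem_iff_phi, h]

theorem witness_eq (n : ℕ) (hn : 3 ≤ n) (M : DFA (Fin 3) (Fin n))
    (hstart : M.start = ⟨0, Nat.lt_of_lt_of_le (Nat.zero_lt_succ 2) hn⟩)
    (haccept : M.accept = {⟨n - 1, Nat.sub_lt (Nat.lt_of_lt_of_le (Nat.zero_lt_succ 2) hn) Nat.one_pos⟩})
    (ha : ∀ q : Fin n,
      (M.step q 0).val = if q.val = 0 then 0 else if q.val = n - 1 then 1 else q.val + 1)
    (hb : ∀ q : Fin n,
      (M.step q 1).val = if q.val = 0 then 1 else if q.val = 1 then 0 else q.val)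
    (hc : ∀ q : Fin n, (M.step q 2).val = if q.val = 1 then 0 else q.val) :
    Nat.card (Quot fun x y : {w : List (Fin 3) // w ≠ []} =>
      ∀ u z : List (Fin 3), u ++ x.val ++ z ∈ M.accepts ↔ u ++ y.val ++ z ∈ M.accepts)
      = n ^ n := by
  classical
  set r : {w : List (Fin 3) // w ≠ []} → {w : List (Fin 3) // w ≠ []} → Prop :=
    fun x y => ∀ u z : List (Fin 3),
      u ++ x.val ++ z ∈ M.accepts ↔ u ++ y.val ++ z ∈ M.accepts with hr
  have key1 : ∀ x y : {w : List (Fin 3) // w ≠ []}, phi M x.val = phi M y.val → r x y :=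
    fun x y h u z => phi_eq_implies_equiv M x.val y.val h u z
  have key2 : ∀ x y : {w : List (Fin 3) // w ≠ []}, r x y → phi M x.val = phi M y.val := by
    intro x y hxy
    funext p
    by_contra hne
    obtain ⟨u, hu⟩ := reach hn M hstart ha hb p
    have hu' : phi M u M.start = p := hu
    rcases Nat.lt_or_ge (phi M x.val p).val (phi M y.val p).val with hlt | hge
    · obtain ⟨z, hz1, hz2⟩ := dist hn M haccept ha _ _ hlt
      have hiff := hxy u z
      rw [mem_iff_phi, mem_iff_phi, hu'] at hiff
      exact hz2 (hiff.mpr hz1)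
    · have hgt : (phi M y.val p).val < (phi M x.val p).val := by
        have hvne : (phi M x.val p).val ≠ (phi M y.val p).val := fun h => hne (Fin.ext h)
        omega
      obtain ⟨z, hz1, hz2⟩ := dist hn M haccept ha _ _ hgt
      have hiff := hxy u z
      rw [mem_iff_phi, mem_iff_phi, hu'] at hiff
      exact hz2 (hiff.mp hz1)
  have surj := phi_surj hn M ha hb hc
  have e : Quot r ≃ Function.End (Fin n) :=
    { toFun := Quot.lift (fun w : {w : List (Fin 3) // w ≠ []} => phi M w.val)
        (fun a b h => key2 a b h)
      invFun := fun f =>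
        Quot.mk r ⟨Classical.choose (surj f), (Classical.choose_spec (surj f)).1⟩
      left_inv := by
        intro q
        induction q using Quot.ind with
        | _ w =>
          exact Quot.sound (key1 _ _ ((Classical.choose_spec (surj (phi M w.val))).2))
      right_inv := fun f => (Classical.choose_spec (surj f)).2 }
  rw [Nat.card_congr e]
  show Nat.card (Fin n → Fin n) = n ^ n
  simp [Nat.card_fun]


/-- General upper bound: the syntactic semigroup of a language recognized by a DFA with
state set `σ` has at most `Nat.card (σ → σ)` elements. -/
theorem upper {α : Type} {σ : Type} [Finite σ] (K : Language α) (N : DFA α σ)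
    (hN : N.accepts = K) :
    syntacticSemigroupSize K ≤ Nat.card (σ → σ) := by
  classical
  haveI : Finite (Function.End σ) := inferInstanceAs (Finite (σ → σ))
  unfold syntacticSemigroupSize
  set r : {w : List α // w ≠ []} → {w : List α // w ≠ []} → Prop :=
    fun x y => ∀ u z : List α, u ++ x.val ++ z ∈ K ↔ u ++ y.val ++ z ∈ K with hr
  have key : ∀ x y : {w : List α // w ≠ []}, phi N x.val = phi N y.val → r x y := by
    intro x y h u z
    rw [← hN]
    exact phi_eq_implies_equiv N x.val y.val h u z
  -- surjection from the range of `phi` onto the quotient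
  set S : Set (Function.End σ) := Set.range (fun w : {w : List α // w ≠ []} => phi N w.val)
    with hS
  have hsurj : ∃ g : S → Quot r, Function.Surjective g := by
    refine ⟨fun f => Quot.mk r (Classical.choose f.2), ?_⟩
    intro q
    induction q using Quot.ind with
    | _ w =>
      refine ⟨⟨phi N w.val, ⟨w, rfl⟩⟩, ?_⟩
      apply Quot.sound
      exact key _ _ (Classical.choose_spec (⟨w, rfl⟩ : ∃ v : {w : List α // w ≠ []},
        phi N v.val = phi N w.val))
  obtain ⟨g, hg⟩ := hsurj
  calc Nat.card (Quot r) ≤ Nat.card S := Nat.card_le_card_of_surjective g hg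
    _ ≤ Nat.card (Function.End σ) := Nat.card_le_card_of_injective _ Subtype.val_injective
    _ = Nat.card (σ → σ) := rfl

end SyntacticWitness

/-- For `n ≥ 3`, the language `L_n` of the DFA over `{a,b,c}` of Definition 1
(encoded as `Fin 3`: `a = 0` the cycle `(1,…,n−1)` fixing `0`, `b = 1` the
transposition `(0,1)`, `c = 2` the map `(1 → 0)`; initial `0`; final `n−1`)
has a syntactic semigroup of cardinality `n^n`, and this is the maximum possible
for any language accepted by a DFA with `n` states. -/
theorem syntactic_semigroup_of_witness (n : ℕ) (hn : 3 ≤ n) (M : DFA (Fin 3) (Fin n))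
    (hstart : M.start = ⟨0, by omega⟩)
    (haccept : M.accept = {⟨n - 1, by omega⟩})
    (ha : ∀ q : Fin n,
      (M.step q 0).val = if q.val = 0 then 0 else if q.val = n - 1 then 1 else q.val + 1)
    (hb : ∀ q : Fin n,
      (M.step q 1).val = if q.val = 0 then 1 else if q.val = 1 then 0 else q.val)
    (hc : ∀ q : Fin n, (M.step q 2).val = if q.val = 1 then 0 else q.val) :
    syntacticSemigroupSize M.accepts = n ^ n ∧
    ∀ (α : Type) (K : Language α) (N : DFA α (Fin n)),
      N.accepts = K → syntacticSemigroupSize K ≤ n ^ n := by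
  constructor
  · exact SyntacticWitness.witness_eq n hn M hstart haccept ha hb hc
  · intro α K N hNK
    have h := SyntacticWitness.upper K N hNK
    simpa [Nat.card_fun] using h
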